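/- If a ∈ A₊ is superharmonic for a Markov operator T (T(a) ≤ a), then its support projection p := supp a is also superharmonic: T(p) ≤ p. -/

import Mathlib

open Filter Topology ContinuousLinearMap

namespace QMP

variable {H : Type*} [NormedAddCommGroup H] [InnerProductSpace ℂ H] [CompleteSpace H]

/-- `T` is a (quantum) Markov operator on the von Neumann algebra `A`:
a normal, unital, completely positive linear map leaving `A` invariant. -/
structure IsMarkov (A : VonNeumannAlgebra H) (T : (H →L[ℂ] H) → (H →L[ℂ] H)) : Prop where
  linear : IsLinearMap ℂ T
  mapsSelf : ∀ x ∈ A, T x ∈ A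
  unital : T 1 = 1
  cp : ∀ (n : ℕ) (a b : Fin n → (H →L[ℂ] H)),
    0 ≤ ∑ i : Fin n, ∑ j : Fin n, star (b i) * T (star (a i) * a j) * b j
  normal : ∀ {ι : Type} [Preorder ι] [IsDirected ι (· ≤ ·)] (f : ι → (H →L[ℂ] H))
    (y : H →L[ℂ] H), Monotone f → IsLUB (Set.range f) y →
      IsLUB (Set.range fun i => T (f i)) (T y)

/-- `y = ∑ₙ Tⁿ x` with convergence in the strong operator topology. -/
def SOTSum (T : (H →L[ℂ] H) → (H →L[ℂ] H)) (x y : H →L[ℂ] H) : Prop :=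
  ∀ η : H, Tendsto (fun N => ∑ n ∈ Finset.range N, (T^[n] x) η) atTop (𝓝 (y η))

/-- `x ∈ A₊` is `T`-summable: `∑ₙ Tⁿ x` converges strongly to an element of `A₊`. -/
def TSummable (A : VonNeumannAlgebra H) (T : (H →L[ℂ] H) → (H →L[ℂ] H))
    (x : H →L[ℂ] H) : Prop :=
  x ∈ A ∧ 0 ≤ x ∧ ∃ y, y ∈ A ∧ 0 ≤ y ∧ SOTSum T x y

/-- `y` is a potential for `T`: `y = ∑ₙ Tⁿ x` for some `x ∈ A₊`. -/
def IsPotential (A : VonNeumannAlgebra H) (T : (H →L[ℂ] H) → (H →L[ℂ] H))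
    (y : H →L[ℂ] H) : Prop :=
  y ∈ A ∧ 0 ≤ y ∧ ∃ x, x ∈ A ∧ 0 ≤ x ∧ SOTSum T x y

/-- `p` is an orthogonal projection belonging to `A`. -/
def IsProj (A : VonNeumannAlgebra H) (p : H →L[ℂ] H) : Prop :=
  p ∈ A ∧ IsSelfAdjoint p ∧ IsIdempotentElem p

/-- `p` is the support projection of the self-adjoint element `a`. -/
def IsSupport (A : VonNeumannAlgebra H) (a p : H →L[ℂ] H) : Prop :=
  IsProj A p ∧ a = p * a * p ∧ ∀ q, IsProj A q → a = q * a * q → p ≤ q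

/-- `s` is the supremum of the family of projections `q` in the projection lattice of `A`. -/
def IsProjSup (A : VonNeumannAlgebra H) {ι : Type*} (q : ι → (H →L[ℂ] H))
    (s : H →L[ℂ] H) : Prop :=
  IsProj A s ∧ (∀ i, q i ≤ s) ∧ ∀ r, IsProj A r → (∀ i, q i ≤ r) → s ≤ r

end QMP

set_option synthInstance.maxHeartbeats 1000000
set_option maxHeartbeats 1000000

namespace SuppProof

open RCLike

variable {H : Type*} [NormedAddCommGroup H] [InnerProductSpace ℂ H] [CompleteSpace H]
variable (a : H →L[ℂ] H)


noncomputable def KK : Submodule ℂ H := (LinearMap.range (a : H →ₗ[ℂ] H)).topologicalClosure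

instance : CompleteSpace (KK a) := (Submodule.isClosed_topologicalClosure _).completeSpace_coe

noncomputable def p0 : H →L[ℂ] H := (KK a).subtypeL ∘L Submodule.orthogonalProjectionOnto (KK a)

lemma range_le_KK (ζ : H) : a ζ ∈ KK a :=
  Submodule.le_topologicalClosure _ ⟨ζ, rfl⟩

lemma p0_mem (ξ : H) : p0 a ξ ∈ KK a := (Submodule.orthogonalProjectionOnto (KK a) ξ).2

lemma p0_eq_self {ξ : H} (h : ξ ∈ KK a) : p0 a ξ = ξ := by
  simpa [p0] using congrArg Subtype.val
    (Submodule.orthogonalProjectionOnto_mem_subspace_eq_self (K := KK a) ⟨ξ, h⟩)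

lemma p0_orth {ξ : H} (h : ξ ∈ (KK a)ᗮ) : p0 a ξ = 0 := by
  simpa [p0] using congrArg Subtype.val
    (Submodule.orthogonalProjectionOnto_apply_of_mem_orthogonal (K := KK a) h)

lemma p0_sa : IsSelfAdjoint (p0 a) := isSelfAdjoint_starProjection (KK a)

lemma p0_idem : IsIdempotentElem (p0 a) := by
  rw [IsIdempotentElem]
  ext ξ
  exact (p0_eq_self a (p0_mem a ξ) : _)

lemma sub_p0_orth (ξ : H) : ξ - p0 a ξ ∈ (KK a)ᗮ :=
  Submodule.sub_starProjection_mem_orthogonal (K := KK a) ξ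

lemma pos_apply_eq_zero (x : H →L[ℂ] H) (hx : 0 ≤ x) (ξ : H)
    (h : re (inner (𝕜 := ℂ) ξ (x ξ)) ≤ 0) : x ξ = 0 := by
  set s := CFC.sqrt x with hs
  have hs0 : (0:H→L[ℂ]H) ≤ s := CFC.sqrt_nonneg x
  have hssa : IsSelfAdjoint s := IsSelfAdjoint.of_nonneg hs0
  have hmul : s * s = x := CFC.sqrt_mul_sqrt_self x
  have h1 : re (inner (𝕜 := ℂ) ξ (x ξ)) = ‖s ξ‖^2 := by
    conv_lhs => rw [← hmul]
    have h2 : (s * s) ξ = s (s ξ) := rfl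
    rw [h2, ← ContinuousLinearMap.adjoint_inner_left, hssa.adjoint_eq, inner_self_eq_norm_sq]
  have h3 : ‖s ξ‖ = 0 := by
    have h4 : ‖s ξ‖^2 = 0 := le_antisymm (h1 ▸ h) (sq_nonneg _)
    simpa using pow_eq_zero_iff (n := 2) (by norm_num) |>.mp h4
  have h5 : s ξ = 0 := norm_eq_zero.mp h3
  calc x ξ = s (s ξ) := by rw [← hmul]; rfl
  _ = 0 := by rw [h5, map_zero]

lemma inner_le_of_le {x y : H →L[ℂ] H} (h : x ≤ y) (ξ : H) :
    re (inner (𝕜:=ℂ) ξ (x ξ)) ≤ re (inner (𝕜:=ℂ) ξ (y ξ)) := by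
  have h1 := (ContinuousLinearMap.le_def x y |>.mp h).2 ξ
  rw [ContinuousLinearMap.reApplyInnerSelf] at h1
  rw [inner_re_symm] at h1
  simp only [ContinuousLinearMap.sub_apply, inner_sub_right, map_sub] at h1
  linarith

lemma le_of_inner_le {x y : H →L[ℂ] H} (hx : IsSelfAdjoint x) (hy : IsSelfAdjoint y)
    (h : ∀ ξ, re (inner (𝕜:=ℂ) ξ (x ξ)) ≤ re (inner (𝕜:=ℂ) ξ (y ξ))) : x ≤ y := by
  rw [ContinuousLinearMap.le_def]
  refine ⟨(hy.sub hx).isSymmetric, fun ξ => ?_⟩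
  rw [ContinuousLinearMap.reApplyInnerSelf, inner_re_symm]
  simp only [ContinuousLinearMap.sub_apply, inner_sub_right, map_sub]
  linarith [h ξ]

lemma ker_orth {η : H} (ha0 : 0 ≤ a) (h : η ∈ (KK a)ᗮ) : a η = 0 := by
  have hs : IsSelfAdjoint a := IsSelfAdjoint.of_nonneg ha0
  apply pos_apply_eq_zero a ha0
  have : inner (𝕜:=ℂ) (a η) η = 0 := (Submodule.mem_orthogonal _ _).mp h _ (range_le_KK a η)
  rw [← hs.adjoint_eq, adjoint_inner_left] at this
  rw [this]; simp

noncomputable def fn (n : ℕ) : H →L[ℂ] H := cfc (fun t : ℝ => min ((n+1 : ℝ) * t) 1) a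

lemma cont (c : ℝ) : Continuous (fun t : ℝ => min (c * t) 1) :=
  (continuous_const.mul continuous_id).min continuous_const

lemma fn_nonneg (ha0 : 0 ≤ a) (n : ℕ) : 0 ≤ fn a n := by
  apply cfc_nonneg
  intro t ht
  have := spectrum_nonneg_of_nonneg ha0 ht
  exact le_min (by positivity) zero_le_one

lemma fn_le_one (n : ℕ) : fn a n ≤ 1 :=
  cfc_le_one _ _ (fun t _ => min_le_right _ _)

lemma fn_mono (ha0 : 0 ≤ a) : Monotone (fn a) := by
  intro m n hmn
  apply cfc_mono (fun t ht => ?_) (cont _).continuousOn (cont _).continuousOn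
  have h0 := spectrum_nonneg_of_nonneg ha0 ht
  have h1 : (m + 1 : ℝ) ≤ (n+1:ℝ) := by exact_mod_cast by omega
  exact min_le_min (by nlinarith) le_rfl

lemma fn_le_smul (ha0 : 0 ≤ a) (n : ℕ) : fn a n ≤ (n+1 : ℕ) • a := by
  have h1 : fn a n ≤ cfc (fun t : ℝ => ((n+1:ℕ):ℝ) * t) a := by
    apply cfc_mono (fun t ht => ?_) (cont _).continuousOn (by fun_prop)
    push_cast
    exact min_le_left _ _
  have h2 : cfc (fun t : ℝ => ((n+1:ℕ):ℝ) * t) a = ((n+1:ℕ):ℝ) • a :=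
    cfc_const_mul_id _ a (IsSelfAdjoint.of_nonneg ha0)
  rw [h2, Nat.cast_smul_eq_nsmul] at h1
  exact h1

lemma fn_norm_mul_sub (ha0 : 0 ≤ a) (n : ℕ) : ‖a - fn a n * a‖ ≤ 1/(n+1 : ℝ) := by
  have hsa := IsSelfAdjoint.of_nonneg ha0
  have key : a - fn a n * a = cfc (fun t : ℝ => t - min ((n+1:ℝ)*t) 1 * t) a := by
    rw [cfc_sub (fun t : ℝ => t) (fun t : ℝ => min ((n+1:ℝ)*t) 1 * t) a (by fun_prop)
      ((cont _).mul continuous_id).continuousOn,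
      cfc_mul _ _ a (cont _).continuousOn (by fun_prop),
      cfc_id' ℝ a, fn]
  rw [key]
  apply norm_cfc_le (by positivity)
  intro t ht
  have ht0 := spectrum_nonneg_of_nonneg ha0 ht
  have hn : (0:ℝ) < n+1 := by positivity
  rcases le_total ((n+1:ℝ)*t) 1 with h | h
  · rw [min_eq_left h, Real.norm_eq_abs, abs_of_nonneg (by nlinarith)]
    rw [le_div_iff₀ hn]
    nlinarith
  · rw [min_eq_right h]
    simp only [one_mul, sub_self, norm_zero]
    positivity

lemma fn_norm_le_one (ha0 : 0 ≤ a) (n : ℕ) : ‖fn a n‖ ≤ 1 := by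
  apply norm_cfc_le zero_le_one
  intro t ht
  have ht0 := spectrum_nonneg_of_nonneg ha0 ht
  rw [Real.norm_eq_abs, abs_of_nonneg (le_min (by positivity) zero_le_one)]
  exact min_le_right _ _

lemma fn_ker (ha0 : 0 ≤ a) (n : ℕ) {η : H} (h : η ∈ (KK a)ᗮ) : fn a n η = 0 := by
  apply pos_apply_eq_zero _ (fn_nonneg a ha0 n)
  have h1 := inner_le_of_le (fn_le_smul a ha0 n) η
  have h2 : ((n+1:ℕ) • a) η = 0 := by
    have : ((n+1:ℕ) • a) η = (n+1:ℕ) • (a η) := rfl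
    rw [this, ker_orth a ha0 h, smul_zero]
  rw [h2] at h1
  simpa using h1

lemma fn_tendsto_range (ha0 : 0 ≤ a) (ζ : H) :
    Tendsto (fun n => fn a n (a ζ)) atTop (𝓝 (a ζ)) := by
  rw [tendsto_iff_norm_sub_tendsto_zero]
  have hb : ∀ n : ℕ, ‖fn a n (a ζ) - a ζ‖ ≤ (1/(n+1:ℝ)) * ‖ζ‖ := by
    intro n
    calc ‖fn a n (a ζ) - a ζ‖ = ‖((fn a n * a - a) : H →L[ℂ] H) ζ‖ := by
          simp [ContinuousLinearMap.sub_apply, mul_apply]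
    _ ≤ ‖fn a n * a - a‖ * ‖ζ‖ := le_opNorm _ _
    _ ≤ (1/(n+1:ℝ)) * ‖ζ‖ := by
          apply mul_le_mul_of_nonneg_right _ (norm_nonneg _)
          rw [← norm_neg, neg_sub]
          exact fn_norm_mul_sub a ha0 n
  have hg : Tendsto (fun n : ℕ => (1/(n+1:ℝ)) * ‖ζ‖) atTop (𝓝 0) := by
    rw [show (0:ℝ) = 0 * ‖ζ‖ by ring]
    exact tendsto_one_div_add_atTop_nhds_zero_nat.mul_const _
  exact squeeze_zero (fun n => norm_nonneg _) hb hg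

lemma fn_tendsto_K (ha0 : 0 ≤ a) {ξ : H} (hξ : ξ ∈ KK a) :
    Tendsto (fun n => fn a n ξ) atTop (𝓝 ξ) := by
  rw [Metric.tendsto_atTop]
  intro ε hε
  have hξ' : ξ ∈ closure ((LinearMap.range (a : H →ₗ[ℂ] H) : Submodule ℂ H) : Set H) := hξ
  obtain ⟨v, hv, hdv⟩ := Metric.mem_closure_iff.mp hξ' (ε/3) (by linarith)
  obtain ⟨ζ, rfl⟩ := hv
  have := fn_tendsto_range a ha0 ζ
  rw [Metric.tendsto_atTop] at this
  obtain ⟨N, hN⟩ := this (ε/3) (by linarith)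
  refine ⟨N, fun n hn => ?_⟩
  have h1 : ‖fn a n (ξ - a ζ)‖ ≤ ‖ξ - a ζ‖ := by
    calc ‖fn a n (ξ - a ζ)‖ ≤ ‖fn a n‖ * ‖ξ - a ζ‖ := le_opNorm _ _
    _ ≤ 1 * ‖ξ - a ζ‖ := mul_le_mul_of_nonneg_right (fn_norm_le_one a ha0 n) (norm_nonneg _)
    _ = ‖ξ - a ζ‖ := one_mul _
  have hd1 : ‖ξ - a ζ‖ < ε/3 := by rw [← dist_eq_norm] at *; exact hdv
  have hd2 : ‖fn a n (a ζ) - a ζ‖ < ε/3 := by rw [← dist_eq_norm]; exact hN n hn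
  rw [dist_eq_norm]
  calc ‖fn a n ξ - ξ‖
      = ‖fn a n (ξ - a ζ) + (fn a n (a ζ) - a ζ) + (a ζ - ξ)‖ := by
        congr 1
        simp only [map_sub]
        abel
    _ ≤ ‖fn a n (ξ - a ζ)‖ + ‖fn a n (a ζ) - a ζ‖ + ‖a ζ - ξ‖ := norm_add₃_le
    _ < ε/3 + ε/3 + ε/3 := by
        have : ‖a ζ - ξ‖ < ε/3 := by rw [norm_sub_rev]; exact hd1
        have h1' : ‖fn a n (ξ - a ζ)‖ < ε/3 := lt_of_le_of_lt h1 hd1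
        linarith
    _ = ε := by ring

lemma fn_tendsto (ha0 : 0 ≤ a) (ξ : H) :
    Tendsto (fun n => fn a n ξ) atTop (𝓝 (p0 a ξ)) := by
  have hdec : ∀ n, fn a n ξ = fn a n (p0 a ξ) := by
    intro n
    conv_lhs => rw [show ξ = p0 a ξ + (ξ - p0 a ξ) by abel]
    rw [map_add, fn_ker a ha0 n (sub_p0_orth a ξ), add_zero]
  simp only [hdec]
  exact fn_tendsto_K a ha0 (p0_mem a ξ)

lemma isLUB_of_tendsto (f : ℕ → (H →L[ℂ] H)) (y : H →L[ℂ] H) (hmono : Monotone f)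
    (hsa : ∀ n, IsSelfAdjoint (f n)) (hy : IsSelfAdjoint y)
    (htend : ∀ ξ : H, Tendsto (fun n => f n ξ) atTop (𝓝 (y ξ))) :
    IsLUB (Set.range f) y := by
  have hinner : ∀ ξ : H, Tendsto (fun n => re (inner (𝕜:=ℂ) ξ (f n ξ))) atTop
      (𝓝 (re (inner (𝕜:=ℂ) ξ (y ξ)))) := by
    intro ξ
    exact (RCLike.continuous_re.tendsto _).comp ((tendsto_const_nhds.inner (htend ξ)))
  constructor
  · rintro x ⟨n, rfl⟩
    refine le_of_inner_le (hsa n) hy (fun ξ => ?_)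
    exact Monotone.ge_of_tendsto (f := fun k => re (inner (𝕜:=ℂ) ξ (f k ξ)))
      (fun i j hij => inner_le_of_le (hmono hij) ξ) (hinner ξ) n
  · intro b hb
    have hb0 : f 0 ≤ b := hb ⟨0, rfl⟩
    have hbsa : IsSelfAdjoint b := by
      have h1 : IsSelfAdjoint (b - f 0) := IsSelfAdjoint.of_nonneg (sub_nonneg.mpr hb0)
      simpa using h1.add (hsa 0)
    refine le_of_inner_le hy hbsa (fun ξ => ?_)
    refine le_of_tendsto (hinner ξ) (Filter.Eventually.of_forall (fun n => ?_))
    exact inner_le_of_le (hb ⟨n, rfl⟩) ξ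

lemma commute_p0 {u : H →L[ℂ] H} (hsa : IsSelfAdjoint a)
    (hu : a * u = u * a) (hu' : a * star u = star u * a) : u * p0 a = p0 a * u := by
  have hKinv : ∀ v : H →L[ℂ] H, a * v = v * a → ∀ ξ ∈ KK a, v ξ ∈ KK a := by
    intro v hv ξ hξ
    have himg : v '' ((LinearMap.range (a : H →ₗ[ℂ] H) : Submodule ℂ H) : Set H) ⊆
        ((LinearMap.range (a : H →ₗ[ℂ] H) : Submodule ℂ H) : Set H) := by
      rintro - ⟨-, ⟨ζ, rfl⟩, rfl⟩
      refine ⟨v ζ, ?_⟩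
      show a (v ζ) = v (a ζ)
      calc a (v ζ) = (a * v) ζ := rfl
      _ = (v * a) ζ := by rw [hv]
      _ = v (a ζ) := rfl
    have hξ' : ξ ∈ closure ((LinearMap.range (a : H →ₗ[ℂ] H) : Submodule ℂ H) : Set H) := hξ
    have hmem : v ξ ∈ closure (v '' ((LinearMap.range (a : H →ₗ[ℂ] H) : Submodule ℂ H) : Set H)) :=
      map_mem_closure v.continuous hξ' (fun x hx => Set.mem_image_of_mem v hx)
    exact closure_mono himg hmem
  have h1 : p0 a * (u * p0 a) = u * p0 a := by
    ext ξ
    exact p0_eq_self a (hKinv u hu _ (p0_mem a ξ))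
  have h2 : p0 a * (star u * p0 a) = star u * p0 a := by
    ext ξ
    exact p0_eq_self a (hKinv (star u) hu' _ (p0_mem a ξ))
  have h3 := congrArg star h2
  simp only [star_mul, star_star, (p0_sa a).star_eq, ← mul_assoc] at h3
  -- h3 : (p0 a * u) * p0 a = p0 a * u
  calc u * p0 a = p0 a * (u * p0 a) := h1.symm
  _ = (p0 a * u) * p0 a := (mul_assoc _ _ _).symm
  _ = p0 a * u := h3

lemma p0_mul_a (hsa : IsSelfAdjoint a) : p0 a * a = a := by
  ext ζ
  exact p0_eq_self a (range_le_KK a ζ)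

lemma a_mul_p0 (hsa : IsSelfAdjoint a) : a * p0 a = a := by
  have h := congrArg star (p0_mul_a a hsa)
  rwa [star_mul, (p0_sa a).star_eq, hsa.star_eq] at h

lemma a_eq_p0_conj (hsa : IsSelfAdjoint a) : a = p0 a * a * p0 a := by
  rw [p0_mul_a a hsa, a_mul_p0 a hsa]

lemma p0_mem_A (A : VonNeumannAlgebra H) (ha : a ∈ A) (hsa : IsSelfAdjoint a) : p0 a ∈ A := by
  rw [← SetLike.mem_coe, ← A.centralizer_centralizer]
  rw [Set.mem_centralizer_iff]
  intro u hu
  have hua : a * u = u * a := hu a ha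
  have hu' : a * star u = star u * a := by
    have h := congrArg star hua
    rw [star_mul, star_mul, hsa.star_eq] at h
    exact h.symm
  exact commute_p0 a hsa hua hu'


lemma mul_eq_zero_of_conj (x c : H →L[ℂ] H) (hx : 0 ≤ x) (h : star c * x * c = 0) :
    x * c = 0 := by
  set s := CFC.sqrt x with hs
  have hssa : IsSelfAdjoint s := IsSelfAdjoint.of_nonneg (CFC.sqrt_nonneg x)
  have hmul : s * s = x := CFC.sqrt_mul_sqrt_self x
  have h1 : star (s * c) * (s * c) = 0 := by
    rw [star_mul, hssa.star_eq]
    calc star c * s * (s * c) = star c * (s * s) * c := by noncomm_ring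
    _ = 0 := by rw [hmul]; exact h
  have h2 : s * c = 0 := CStarRing.star_mul_self_eq_zero_iff _ |>.mp h1
  calc x * c = s * (s * c) := by rw [← hmul]; noncomm_ring
  _ = 0 := by rw [h2, mul_zero]

open QMP in
lemma markov_pos {A : VonNeumannAlgebra H} {T : (H →L[ℂ] H) → (H →L[ℂ] H)}
    (hT : IsMarkov A T) {x : H →L[ℂ] H} (hx : 0 ≤ x) : 0 ≤ T x := by
  set s := CFC.sqrt x with hs
  have hssa : IsSelfAdjoint s := IsSelfAdjoint.of_nonneg (CFC.sqrt_nonneg x)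
  have hmul : star s * s = x := by rw [hssa.star_eq]; exact CFC.sqrt_mul_sqrt_self x
  have h := hT.cp 1 (fun _ => s) (fun _ => 1)
  simpa [hmul] using h

open QMP in
lemma markov_mono {A : VonNeumannAlgebra H} {T : (H →L[ℂ] H) → (H →L[ℂ] H)}
    (hT : IsMarkov A T) {x y : H →L[ℂ] H} (h : x ≤ y) : T x ≤ T y := by
  have h1 : 0 ≤ T (y - x) := markov_pos hT (sub_nonneg.mpr h)
  have h2 : T (y - x) = T y - T x := by
    have := (IsLinearMap.mk' T hT.linear).map_sub y x
    simpa using this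
  rw [h2] at h1
  exact sub_nonneg.mp h1

open QMP in
lemma markov_smul_nat {A : VonNeumannAlgebra H} {T : (H →L[ℂ] H) → (H →L[ℂ] H)}
    (hT : IsMarkov A T) (n : ℕ) (x : H →L[ℂ] H) : T (n • x) = n • T x := by
  have := _root_.map_nsmul (IsLinearMap.mk' T hT.linear) n x
  simpa using this

end SuppProof


open QMP SuppProof RCLike

/-- The support projection of a superharmonic positive element is superharmonic. -/
theorem support_of_superharmonic_is_superharmonic
    {H : Type*} [NormedAddCommGroup H] [InnerProductSpace ℂ H] [CompleteSpace H]
    (A : VonNeumannAlgebra H) (T : (H →L[ℂ] H) → (H →L[ℂ] H)) (hT : IsMarkov A T)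
    (a p : H →L[ℂ] H) (ha : a ∈ A) (ha0 : 0 ≤ a) (hsuper : T a ≤ a)
    (hp : IsSupport A a p) :
    T p ≤ p := by
  obtain ⟨⟨hpmem, hpsa, hpidem⟩, hpap, hpmin⟩ := hp
  have hasa : IsSelfAdjoint a := IsSelfAdjoint.of_nonneg ha0
  set q : H →L[ℂ] H := 1 - p with hq
  have hqsa : IsSelfAdjoint q := by
    rw [hq]; exact (IsSelfAdjoint.of_nonneg zero_le_one).sub hpsa
  have hqp : q * p = 0 := by
    rw [hq, sub_mul, one_mul, hpidem.eq, sub_self]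
  have hpq : p * q = 0 := by
    rw [hq, mul_sub, mul_one, hpidem.eq, sub_self]
  have hpaddq : p + q = 1 := by rw [hq]; abel
  have hqaq : q * a * q = 0 := by
    conv_lhs => rw [hpap]
    calc q * (p * a * p) * q = (q * p) * a * (p * q) := by noncomm_ring
    _ = 0 := by rw [hqp, hpq, zero_mul, mul_zero]
  -- `a` kills vectors in the range of `q`
  have haq : ∀ ξ : H, a (q ξ) = 0 := by
    intro ξ
    apply pos_apply_eq_zero a ha0
    have h1 : inner (𝕜 := ℂ) (q ξ) (a (q ξ)) = inner (𝕜 := ℂ) ξ ((q * a * q) ξ) := by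
      calc inner (𝕜 := ℂ) (q ξ) (a (q ξ))
          = inner (𝕜 := ℂ) (ContinuousLinearMap.adjoint q ξ) (a (q ξ)) := by
            rw [hqsa.adjoint_eq]
        _ = inner (𝕜 := ℂ) ξ (q (a (q ξ))) := ContinuousLinearMap.adjoint_inner_left q _ _
        _ = inner (𝕜 := ℂ) ξ ((q * a * q) ξ) := rfl
    rw [h1, hqaq]
    simp
  -- `fn a n` kills vectors in the range of `q`
  have hfnq : ∀ (n : ℕ) (ξ : H), fn a n (q ξ) = 0 := by
    intro n ξ
    apply pos_apply_eq_zero _ (fn_nonneg a ha0 n)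
    have h1 := inner_le_of_le (fn_le_smul a ha0 n) (q ξ)
    have h2 : ((n+1 : ℕ) • a) (q ξ) = 0 := by
      show (n+1 : ℕ) • (a (q ξ)) = 0
      rw [haq, smul_zero]
    rw [h2] at h1
    simpa using h1
  -- each `fn a n` is dominated by `p`
  have hfnp : ∀ n : ℕ, fn a n ≤ p := by
    intro n
    have hfnsa : IsSelfAdjoint (fn a n) := IsSelfAdjoint.of_nonneg (fn_nonneg a ha0 n)
    refine le_of_inner_le hfnsa hpsa (fun ξ => ?_)
    have hsplit : p ξ + q ξ = ξ := by
      have : (p + q) ξ = (1 : H →L[ℂ] H) ξ := by rw [hpaddq]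
      simpa using this
    have h0 : fn a n ξ = fn a n (p ξ) := by
      conv_lhs => rw [← hsplit]
      rw [map_add, hfnq, add_zero]
    have hmv : ∀ y : H, inner (𝕜 := ℂ) (q ξ) y = inner (𝕜 := ℂ) ξ (q y) := by
      intro y
      calc inner (𝕜 := ℂ) (q ξ) y
          = inner (𝕜 := ℂ) (ContinuousLinearMap.adjoint q ξ) y := by rw [hqsa.adjoint_eq]
        _ = inner (𝕜 := ℂ) ξ (q y) := ContinuousLinearMap.adjoint_inner_left q _ _
    have h2 : inner (𝕜 := ℂ) (q ξ) (fn a n (p ξ)) = 0 := by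
      calc inner (𝕜 := ℂ) (q ξ) (fn a n (p ξ))
          = inner (𝕜 := ℂ) (ContinuousLinearMap.adjoint (fn a n) (q ξ)) (p ξ) :=
            (ContinuousLinearMap.adjoint_inner_left _ _ _).symm
        _ = inner (𝕜 := ℂ) (fn a n (q ξ)) (p ξ) := by rw [hfnsa.adjoint_eq]
        _ = 0 := by rw [hfnq]; exact inner_zero_left _
    have h3 : inner (𝕜 := ℂ) (q ξ) (p ξ) = 0 := by
      rw [hmv (p ξ), show q (p ξ) = (q * p) ξ from rfl, hqp]
      simp
    have e1 : inner (𝕜 := ℂ) ξ (fn a n ξ) = inner (𝕜 := ℂ) (p ξ) (fn a n (p ξ)) := by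
      calc inner (𝕜 := ℂ) ξ (fn a n ξ) = inner (𝕜 := ℂ) ξ (fn a n (p ξ)) := by rw [h0]
      _ = inner (𝕜 := ℂ) (p ξ) (fn a n (p ξ)) + inner (𝕜 := ℂ) (q ξ) (fn a n (p ξ)) := by
            rw [← inner_add_left, hsplit]
      _ = inner (𝕜 := ℂ) (p ξ) (fn a n (p ξ)) := by rw [h2, add_zero]
    have e2 : inner (𝕜 := ℂ) ξ (p ξ) = inner (𝕜 := ℂ) (p ξ) (p ξ) := by
      calc inner (𝕜 := ℂ) ξ (p ξ)
          = inner (𝕜 := ℂ) (p ξ) (p ξ) + inner (𝕜 := ℂ) (q ξ) (p ξ) := by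
            rw [← inner_add_left, hsplit]
      _ = inner (𝕜 := ℂ) (p ξ) (p ξ) := by rw [h3, add_zero]
    have e3 : re (inner (𝕜 := ℂ) (p ξ) (fn a n (p ξ))) ≤ re (inner (𝕜 := ℂ) (p ξ) (p ξ)) := by
      have h4 := inner_le_of_le (fn_le_one a n) (p ξ)
      simpa using h4
    rw [e1, e2]
    exact e3
  -- the support projection equals the range projection `p0 a`
  have hlub : IsLUB (Set.range (fn a)) (p0 a) :=
    isLUB_of_tendsto (fn a) (p0 a) (fn_mono a ha0)
      (fun n => IsSelfAdjoint.of_nonneg (fn_nonneg a ha0 n)) (p0_sa a) (fn_tendsto a ha0)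
  have hpeq : p = p0 a := by
    have hle1 : p0 a ≤ p := hlub.2 (by rintro x ⟨n, rfl⟩; exact hfnp n)
    have hle2 : p ≤ p0 a :=
      hpmin (p0 a) ⟨p0_mem_A a A ha hasa, p0_sa a, p0_idem a⟩ (a_eq_p0_conj a hasa)
    exact le_antisymm hle2 hle1
  have hlubp : IsLUB (Set.range (fn a)) p := hpeq ▸ hlub
  have htlub : IsLUB (Set.range fun n => T (fn a n)) (T p) :=
    hT.normal (fn a) p (fn_mono a ha0) hlubp
  -- each `T (fn a n)` is dominated by `p`
  have hupper : ∀ n : ℕ, T (fn a n) ≤ p := by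
    intro n
    have h1 : 0 ≤ T (fn a n) := markov_pos hT (fn_nonneg a ha0 n)
    have hqTq : q * T (fn a n) * q = 0 := by
      have h2 : T (fn a n) ≤ (n+1 : ℕ) • T a := by
        have h2' := markov_mono hT (fn_le_smul a ha0 n)
        rwa [markov_smul_nat hT] at h2'
      have h3 : q * T (fn a n) * q ≤ q * ((n+1 : ℕ) • T a) * q := by
        have := star_left_conjugate_le_conjugate h2 q
        rwa [hqsa.star_eq] at this
      have h4 : q * ((n+1 : ℕ) • T a) * q = (n+1 : ℕ) • (q * T a * q) := by
        rw [mul_smul_comm, smul_mul_assoc]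
      have h5 : q * T a * q ≤ 0 := by
        have h6 := star_left_conjugate_le_conjugate hsuper q
        rw [hqsa.star_eq] at h6
        calc q * T a * q ≤ q * a * q := h6
        _ = 0 := hqaq
      have h7 : (n+1 : ℕ) • (q * T a * q) ≤ 0 := by
        simpa using nsmul_le_nsmul_right h5 (n+1)
      have h8 : 0 ≤ q * T (fn a n) * q := by
        have := star_left_conjugate_nonneg h1 q
        rwa [hqsa.star_eq] at this
      exact le_antisymm (h3.trans (h4 ▸ h7)) h8
    have hTq : T (fn a n) * q = 0 := by
      apply mul_eq_zero_of_conj _ _ h1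
      rwa [hqsa.star_eq]
    have hqT : q * T (fn a n) = 0 := by
      have h9 := congrArg star hTq
      rwa [star_mul, hqsa.star_eq, (IsSelfAdjoint.of_nonneg h1).star_eq, star_zero] at h9
    have hPT : T (fn a n) = p * T (fn a n) * p := by
      have e1 : T (fn a n) * p = T (fn a n) := by
        have h10 : T (fn a n) * (p + q) = T (fn a n) := by rw [hpaddq, mul_one]
        rwa [mul_add, hTq, add_zero] at h10
      have e2 : p * T (fn a n) = T (fn a n) := by
        have h11 : (p + q) * T (fn a n) = T (fn a n) := by rw [hpaddq, one_mul]
        rwa [add_mul, hqT, add_zero] at h11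
      rw [mul_assoc, e1, e2]
    have hle1 : T (fn a n) ≤ 1 := by
      have h12 := markov_mono hT (fn_le_one a n)
      rwa [hT.unital] at h12
    calc T (fn a n) = p * T (fn a n) * p := hPT
    _ ≤ p * 1 * p := by
        have h13 := star_left_conjugate_le_conjugate hle1 p
        rwa [hpsa.star_eq] at h13
    _ = p := by rw [mul_one, hpidem.eq]
  exact htlub.2 (by rintro x ⟨n, rfl⟩; exact hupper n)
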